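/- Let S be a finite nonempty index set, x : S → ℝ^d, let Σ be a symmetric positive-semidefinite d×d matrix with ⟨u, Σu⟩ ≤ ‖u‖² for all u ∈ ℝ^d, let θ ≥ 1, C ≥ 1, and a ≥ 0. Suppose: (i) for every subset T ⊆ S with |T| ≥ (1 − 1/θ²)·|S| and every u ∈ ℝ^d, ⟨u, Σu⟩ − a·‖u‖² ≤ (1/|T|)·Σ_{j∈T} ⟨x_j, u⟩²; and (ii) for every u ∈ ℝ^d, (1/|S|)·Σ_{j∈S} ⟨x_j, u⟩² ≤ ⟨u, Σu⟩ + a·‖u‖². Then for every subset S′ ⊆ S with |S′| ≤ |S|/θ² and every unit vector u ∈ ℝ^d, Σ_{j∈S′} ⟨x_j, u⟩² ≤ |S|·(1/θ² + 2a). -/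

import Mathlib

open scoped RealInnerProductSpace

set_option maxHeartbeats 1000000 in
/-- Let `Sig` be a symmetric PSD matrix with `⟨u, Sig u⟩ ≤ ‖u‖²` for all
`u`. If the empirical second moments of `x` on every large subset `T` of `S` dominate
`⟨u, Sig u⟩ − a‖u‖²`, and on `S` itself are dominated by `⟨u, Sig u⟩ + a‖u‖²`, then for any
small subset `S′` (of size at most `|S|/θ²`) and any unit vector `u`,
`Σ_{j∈S′} ⟨x_j, u⟩² ≤ |S|(1/θ² + 2a)`. -/
theorem stmt16 {d : ℕ} {ι : Type*} (S : Finset ι) (hS : S.Nonempty)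
    (x : ι → EuclideanSpace ℝ (Fin d))
    (Sig : Matrix (Fin d) (Fin d) ℝ) (hSigsymm : Sig.IsSymm) (hSigpsd : Sig.PosSemidef)
    (hSigle : ∀ u : EuclideanSpace ℝ (Fin d), ⟪u, Matrix.toEuclideanLin Sig u⟫ ≤ ‖u‖ ^ 2)
    (θ C a : ℝ) (hθ : 1 ≤ θ) (hC : 1 ≤ C) (ha : 0 ≤ a)
    (hlow : ∀ T : Finset ι, T ⊆ S → (1 - 1 / θ ^ 2) * S.card ≤ T.card →
      ∀ u : EuclideanSpace ℝ (Fin d),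
        ⟪u, Matrix.toEuclideanLin Sig u⟫ - a * ‖u‖ ^ 2 ≤
          (T.card : ℝ)⁻¹ * ∑ j ∈ T, ⟪x j, u⟫ ^ 2)
    (hup : ∀ u : EuclideanSpace ℝ (Fin d),
      (S.card : ℝ)⁻¹ * ∑ j ∈ S, ⟪x j, u⟫ ^ 2 ≤
        ⟪u, Matrix.toEuclideanLin Sig u⟫ + a * ‖u‖ ^ 2) :
    ∀ S' : Finset ι, S' ⊆ S → (S'.card : ℝ) ≤ (S.card : ℝ) / θ ^ 2 →
      ∀ u : EuclideanSpace ℝ (Fin d), ‖u‖ = 1 →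
        ∑ j ∈ S', ⟪x j, u⟫ ^ 2 ≤ (S.card : ℝ) * (1 / θ ^ 2 + 2 * a) := by
  classical
  intro S' hsub hcard u hu
  set q : ℝ := ⟪u, Matrix.toEuclideanLin Sig u⟫ with hq
  have hθ2 : (0:ℝ) < θ ^ 2 := by positivity
  have hq0 : 0 ≤ q := by
    have := hSigpsd.dotProduct_mulVec_nonneg ((WithLp.equiv 2 _) u)
    simpa [hq, Matrix.toEuclideanLin_apply, PiLp.inner_apply, dotProduct,
      mul_comm] using this
  have hq1 : q ≤ 1 := by simpa [hu] using hSigle u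
  set T : Finset ι := S \ S' with hT
  have hTsub : T ⊆ S := Finset.sdiff_subset
  have hScard : (0:ℝ) < S.card := by exact_mod_cast Finset.card_pos.mpr hS
  have hTcard : (T.card : ℝ) = S.card - S'.card := by
    rw [hT, Finset.card_sdiff_of_subset hsub]
    have := Finset.card_le_card hsub
    push_cast [Nat.cast_sub this]
    ring
  have hTbig : (1 - 1 / θ ^ 2) * S.card ≤ T.card := by
    rw [hTcard]
    have : (S.card : ℝ) / θ ^ 2 = (1 / θ^2) * S.card := by ring
    nlinarith [hcard]
  have hlowT := hlow T hTsub hTbig u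
  rw [hu] at hlowT
  have hsumT : (T.card : ℝ) * (q - a) ≤ ∑ j ∈ T, ⟪x j, u⟫ ^ 2 := by
    rcases Nat.eq_zero_or_pos T.card with h0 | hpos
    · rw [Finset.card_eq_zero] at h0
      simp [h0]
    · have hc : (0:ℝ) < T.card := by exact_mod_cast hpos
      calc (T.card : ℝ) * (q - a) ≤ (T.card : ℝ) * ((T.card : ℝ)⁻¹ * ∑ j ∈ T, ⟪x j, u⟫ ^ 2) := by
            apply mul_le_mul_of_nonneg_left _ hc.le
            simpa using hlowT
        _ = ∑ j ∈ T, ⟪x j, u⟫ ^ 2 := by field_simp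
  have hsumS : ∑ j ∈ S, ⟪x j, u⟫ ^ 2 ≤ (S.card : ℝ) * (q + a) := by
    have h := hup u
    rw [hu] at h
    have := mul_le_mul_of_nonneg_left h hScard.le
    calc ∑ j ∈ S, ⟪x j, u⟫ ^ 2 = (S.card : ℝ) * ((S.card : ℝ)⁻¹ * ∑ j ∈ S, ⟪x j, u⟫ ^ 2) := by
          field_simp
      _ ≤ (S.card : ℝ) * (q + a) := by simpa using this
  have hsplit : ∑ j ∈ S', ⟪x j, u⟫ ^ 2 + ∑ j ∈ T, ⟪x j, u⟫ ^ 2 = ∑ j ∈ S, ⟪x j, u⟫ ^ 2 := by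
    have h := Finset.sum_sdiff (f := fun j => ⟪x j, u⟫ ^ 2) hsub
    rw [hT]; linarith [h]
  have hTle : (T.card : ℝ) ≤ S.card := by exact_mod_cast Finset.card_le_card hTsub
  have key : ∑ j ∈ S', ⟪x j, u⟫ ^ 2 ≤ (S'.card : ℝ) * q + 2 * (S.card : ℝ) * a := by
    nlinarith [hsumT, hsumS, hsplit, hTcard, hTle]
  have : (S'.card : ℝ) * q ≤ (S.card : ℝ) / θ ^ 2 := by
    have h1 : (S'.card : ℝ) * q ≤ ((S.card : ℝ) / θ ^ 2) * q :=
      mul_le_mul_of_nonneg_right hcard hq0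
    have h2 : ((S.card : ℝ) / θ ^ 2) * q ≤ (S.card : ℝ) / θ ^ 2 := by
      nlinarith [div_nonneg hScard.le hθ2.le]
    linarith
  have : (S.card : ℝ) / θ^2 = (S.card:ℝ) * (1/θ^2) := by ring
  nlinarith [key]
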